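/- Let {x,y}, Z, W be pairwise disjoint node sets in an ADMG G (with x and y single nodes) such that (Z ∪ W) ∩ forb_G(x,y) = ∅ and y ⊥_{G̃} Z | W. Then every proper walk from Z to y in G that is open given W contains x, and its final part from an occurrence of x to y is a subwalk consisting solely of directed edges pointing toward y (a segment of the form x → … → y, containing no collider). -/

import Mathlib

/-- Edge type of a step on a walk in a mixed graph, relative to the direction of travel:
`fwd` is a directed edge pointing forward, `back` a directed edge pointing backward,
`bi` a bidirected edge. -/
inductive EdgeDir : Type
  | fwd
  | back
  | bi
  deriving DecidableEq

/-- The edge has an arrowhead at its second endpoint. -/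
def EdgeDir.arrowSnd : EdgeDir → Prop
  | .fwd => True
  | .back => False
  | .bi => True

/-- The edge has an arrowhead at its first endpoint. -/
def EdgeDir.arrowFst : EdgeDir → Prop
  | .fwd => False
  | .back => True
  | .bi => True

/-- The common node between consecutive walk edges `e₁, e₂` is a collider:
both edges have an arrowhead at it. -/
def IsColliderPair (e₁ e₂ : EdgeDir) : Prop := e₁.arrowSnd ∧ e₂.arrowFst

/-- A mixed graph: a set of directed edges and a set of bidirected edges on node type `V`. -/
structure MixedGraph (V : Type) where
  dir : V → V → Prop
  bidir : V → V → Prop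

namespace MixedGraph

variable {V : Type}

/-- `G` is an acyclic directed mixed graph: the bidirected edges are symmetric and
the directed edges contain no directed cycle. -/
def IsADMG (G : MixedGraph V) : Prop :=
  (∀ a b, G.bidir a b → G.bidir b a) ∧ ∀ v, ¬ Relation.TransGen G.dir v v

/-- There is an edge of type `e` between `a` and `b` (in this travel direction). -/
def IsEdge (G : MixedGraph V) : EdgeDir → V → V → Prop
  | .fwd, a, b => G.dir a b
  | .back, a, b => G.dir b a
  | .bi, a, b => G.bidir a b

/-- Walks in a mixed graph. -/
inductive Walk (G : MixedGraph V) : V → V → Type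
  | nil (v : V) : Walk G v v
  | cons {a b c : V} (e : EdgeDir) (hab : G.IsEdge e a b) (w : Walk G b c) : Walk G a c

namespace Walk

variable {G : MixedGraph V}

/-- The list of nodes of a walk, in order (with multiplicity). -/
def support : {a b : V} → G.Walk a b → List V
  | a, _, .nil _ => [a]
  | a, _, .cons _ _ w => a :: w.support

/-- The list of edge types along a walk. -/
def edges : {a b : V} → G.Walk a b → List EdgeDir
  | _, _, .nil _ => []
  | _, _, .cons e _ w => e :: w.edges

/-- All edges of the walk are directed and point toward the end of the walk. -/
def AllFwd : {a b : V} → G.Walk a b → Prop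
  | _, _, .nil _ => True
  | _, _, .cons e _ w => e = EdgeDir.fwd ∧ w.AllFwd

/-- Auxiliary predicate: the current node `b` was reached via an edge of type `e₁` and
the walk continues with `w`; every interior node from `b` onward that is a collider is in `W`
and every interior node from `b` onward that is a non-collider is not in `W`. -/
def openFrom (W : Set V) : EdgeDir → (b : V) → {c : V} → G.Walk b c → Prop
  | _, _, _, .nil _ => True
  | e₁, b, _, @Walk.cons _ _ _ m _ e₂ _ w =>
      (IsColliderPair e₁ e₂ → b ∈ W) ∧ (¬ IsColliderPair e₁ e₂ → b ∉ W) ∧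
      openFrom W e₂ m w

/-- A walk is open given `W` if every collider on it lies in `W` and no non-collider
on it lies in `W`. -/
def IsOpen {a b : V} (W : Set V) (w : G.Walk a b) : Prop :=
  match w with
  | .nil _ => True
  | @Walk.cons _ _ _ m _ e _ w' => openFrom W e m w'

/-- The walk ends with a segment of the form `x → ⋯ → end`: it has a final subwalk that
starts at `x` and consists solely of directed edges pointing toward the end of the walk. -/
def EndsWithDirFrom (x : V) : {a b : V} → G.Walk a b → Prop
  | a, _, .nil _ => a = x
  | a, _, .cons e _ w => (a = x ∧ e = EdgeDir.fwd ∧ w.AllFwd) ∨ w.EndsWithDirFrom x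

/-- The first edge of the walk has an arrowhead at the start node. -/
def firstArrowIn : {a b : V} → G.Walk a b → Prop
  | _, _, .nil _ => False
  | _, _, .cons e _ _ => e.arrowFst

/-- The last edge of the walk has an arrowhead at the end node. -/
def lastArrowIn : {a b : V} → G.Walk a b → Prop
  | _, _, .nil _ => False
  | _, _, .cons e _ (.nil _) => e.arrowSnd
  | _, _, .cons _ _ (.cons e h w) => lastArrowIn (.cons e h w)

/-- For each interior node of the walk, the pair of edges incident to it on the walk,
together with the node itself. -/
def colliderTriples {a b : V} (w : G.Walk a b) : List (EdgeDir × EdgeDir × V) :=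
  w.edges.zip (w.edges.tail.zip w.support.tail)

end Walk

/-- `X` and `Z` are d-connected given `C`: some walk from a node of `X` to a node of `Z`
is open given `C`. -/
def dConn (G : MixedGraph V) (X Z C : Set V) : Prop :=
  ∃ x ∈ X, ∃ z ∈ Z, ∃ w : G.Walk x z, w.IsOpen C

/-- The descendants of `x` (including `x` itself). -/
def desc (G : MixedGraph V) (x : V) : Set V := {v | Relation.ReflTransGen G.dir x v}

/-- The descendants of a set of nodes. -/
def descSet (G : MixedGraph V) (S : Set V) : Set V :=
  {v | ∃ s ∈ S, Relation.ReflTransGen G.dir s v}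

/-- The ancestors of a set of nodes (including the set itself). -/
def anc (G : MixedGraph V) (S : Set V) : Set V :=
  {v | ∃ s ∈ S, Relation.ReflTransGen G.dir v s}

/-- The parents of a set of nodes. -/
def pa (G : MixedGraph V) (S : Set V) : Set V := {p | ∃ s ∈ S, G.dir p s}

/-- `causal_G(x,y)`: the nodes `v ≠ x` lying on a proper directed path from `x` to `y`. -/
def causal (G : MixedGraph V) (x y : V) : Set V :=
  {v | v ≠ x ∧ ∃ w : G.Walk x y, w.AllFwd ∧ w.support.Nodup ∧ v ∈ w.support}

/-- The forbidden nodes `forb_G(x,y) = de_G(causal_G(x,y)) ∪ {x}`. -/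
def forb (G : MixedGraph V) (x y : V) : Set V := G.descSet (G.causal x y) ∪ {x}

/-- `G̃`: the graph `G` with every directed edge from `x` to a node of `causal_G(x,y)` removed. -/
def tilde (G : MixedGraph V) (x y : V) : MixedGraph V where
  dir a b := G.dir a b ∧ ¬(a = x ∧ b ∈ G.causal x y)
  bidir := G.bidir

/-- `(Z, W)` is a valid conditional instrumental set relative to `(x, y)` in `G`
(the graphical criterion of Henckel et al., taken as the definition): the sets
`{x,y}`, `Z`, `W` are pairwise disjoint, `(Z ∪ W) ∩ forb_G(x,y) = ∅`, `x ⊄⊥_G Z | W`,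
and `y ⊥_G̃ Z | W`. -/
def ValidCIS (G : MixedGraph V) (x y : V) (Z W : Set V) : Prop :=
  x ≠ y ∧ x ∉ Z ∧ x ∉ W ∧ y ∉ Z ∧ y ∉ W ∧ Disjoint Z W ∧
  (Z ∪ W) ∩ G.forb x y = ∅ ∧
  G.dConn {x} Z W ∧
  ¬ (G.tilde x y).dConn {y} Z W

/-- `W` is a nearest separator with respect to `(y, z, R)` in `H` (with ambient node `x`). -/
def NearestSep (H : MixedGraph V) (x y z : V) (R : Set V) (W : Set V) : Prop :=
  W ⊆ R ∩ H.anc {y, z} ∧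
  ¬ H.dConn {y} {z} W ∧
  ∀ w ∈ W, ∀ W' ⊆ (R ∩ H.anc {y, z}) \ {x, y, w},
    H.dConn {w} {z} W' → H.dConn {y} {z} W'

/-- `dis_{G,W}(u)`: the nodes connected to `u` via a path of bidirected edges with no
node in `W` (with `u ∈ dis_{G,W}(u)`). -/
def dis (G : MixedGraph V) (W : Set V) (u : V) : Set V :=
  {v | Relation.ReflTransGen (fun a b => G.bidir a b ∧ a ∉ W ∧ b ∉ W) u v}

/-- `dis⁺_{G,W}(u) = (dis_{G,W}(u) ∪ pa_G(dis_{G,W}(u))) ∖ W`. -/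
def disPlus (G : MixedGraph V) (W : Set V) (u : V) : Set V :=
  (G.dis W u ∪ G.pa (G.dis W u)) \ W

/-- `W^opt` of Henckel et al. -/
def Wopt (G : MixedGraph V) (x y : V) : Set V := G.disPlus {x} y \ {x, y}

/-- `Z^opt` of Henckel et al. -/
def Zopt (G : MixedGraph V) (x y : V) : Set V :=
  G.disPlus {y} x \ (G.Wopt x y ∪ {x, y})

/-- The latent projection of `G` over the latent nodes `L`: a directed edge exactly when
`G` has a directed path whose non-endpoint nodes lie in `L`, and a bidirected edge exactly
when `G` has a path whose non-endpoint nodes are non-colliders lying in `L` and whose first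
and last edges have an arrowhead at the respective endpoint. -/
def latentProj (G : MixedGraph V) (L : Set V) : MixedGraph V where
  dir a b := a ∉ L ∧ b ∉ L ∧ ∃ w : G.Walk a b,
    w.edges ≠ [] ∧ w.AllFwd ∧ w.support.Nodup ∧ ∀ v ∈ w.support.tail.dropLast, v ∈ L
  bidir a b := a ∉ L ∧ b ∉ L ∧ ∃ w : G.Walk a b,
    w.support.Nodup ∧ w.firstArrowIn ∧ w.lastArrowIn ∧
    (∀ v ∈ w.support.tail.dropLast, v ∈ L) ∧
    ∀ t ∈ w.colliderTriples, ¬ IsColliderPair t.1 t.2.1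

end MixedGraph

/-- The moralization of a DAG with edge relation `E` contains the (undirected) edge
`a − b` (for `a ≠ b`) exactly when `E a b`, or `E b a`, or `a` and `b` have a common child. -/
def MoralEdge {α : Type} (E : α → α → Prop) (a b : α) : Prop :=
  a ≠ b ∧ (E a b ∨ E b a ∨ ∃ c, E a c ∧ E b c)

/-! ### Auxiliary machinery for the proof of Statement 10. -/

/-- Flip an edge type (reverse the travel direction). -/
def EdgeDir.flip : EdgeDir → EdgeDir
  | .fwd => .back
  | .back => .fwd
  | .bi => .bi

namespace MixedGraph

variable {V : Type} {G : MixedGraph V}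

lemma isEdge_flip (hsym : ∀ a b, G.bidir a b → G.bidir b a) {e : EdgeDir} {a b : V}
    (h : G.IsEdge e a b) : G.IsEdge e.flip b a := by
  cases e with
  | fwd => exact h
  | back => exact h
  | bi => exact hsym a b h

lemma colliderPair_flip (e₁ e₂ : EdgeDir) :
    IsColliderPair e₂.flip e₁.flip ↔ IsColliderPair e₁ e₂ := by
  cases e₁ <;> cases e₂ <;>
    simp [IsColliderPair, EdgeDir.flip, EdgeDir.arrowFst, EdgeDir.arrowSnd, and_comm]

namespace Walk

/-- The first edge of a walk, if any. -/
def firstE? : {a b : V} → G.Walk a b → Option EdgeDir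
  | _, _, .nil _ => none
  | _, _, .cons e _ _ => some e

lemma support_start : ∀ {a b : V} (w : G.Walk a b), ∃ t, w.support = a :: t
  | _, _, .nil _ => ⟨[], rfl⟩
  | _, _, .cons _ _ w => ⟨w.support, rfl⟩

lemma start_mem_support {a b : V} (w : G.Walk a b) : a ∈ w.support := by
  obtain ⟨t, ht⟩ := w.support_start
  rw [ht]; exact List.mem_cons_self (a := a) (l := t)

lemma isOpen_of_openFrom {W : Set V} {e : EdgeDir} {a b : V} {w : G.Walk a b}
    (h : w.openFrom W e a) : w.IsOpen W := by
  cases w with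
  | nil => trivial
  | cons e' h' w' => exact h.2.2

/-- Reverse-with-accumulator for walks; needs symmetry of bidirected edges. -/
def revAux (hsym : ∀ a b, G.bidir a b → G.bidir b a) :
    {a b c : V} → G.Walk a b → G.Walk a c → G.Walk b c
  | _, _, _, .nil _, acc => acc
  | _, _, _, .cons e h w, acc => revAux hsym w (.cons e.flip (isEdge_flip hsym h) acc)

/-- The reversal of an open walk (with an open accumulator attached with a valid
junction condition) is open. -/
lemma revAux_isOpen {W : Set V} (hsym : ∀ a b, G.bidir a b → G.bidir b a) :
    ∀ {a b c : V} (p : G.Walk a b) (acc : G.Walk a c),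
      p.IsOpen W → acc.IsOpen W →
      (∀ e₁ e₂, p.firstE? = some e₁ → acc.firstE? = some e₂ →
        (IsColliderPair e₁.flip e₂ → a ∈ W) ∧ (¬ IsColliderPair e₁.flip e₂ → a ∉ W)) →
      (revAux hsym p acc).IsOpen W := by
  intro a b c p
  induction p with
  | nil v => intro acc _ hacc _; exact hacc
  | @cons a m b e₁ h w ih =>
    intro acc hp hacc hJ
    have hp' : w.openFrom W e₁ m := hp
    refine ih (.cons e₁.flip (isEdge_flip hsym h) acc) (isOpen_of_openFrom hp') ?_ ?_
    · -- IsOpen of the new accumulator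
      show acc.openFrom W e₁.flip a
      cases acc with
      | nil => trivial
      | @cons _ n _ f hf acc₂ =>
        exact ⟨(hJ e₁ f rfl rfl).1, (hJ e₁ f rfl rfl).2, hacc⟩
    · -- junction for the recursive call
      intro w₁ f' hw₁ hf'
      cases w with
      | nil => simp [firstE?] at hw₁
      | @cons _ n _ e₂ h₂ w₂ =>
        simp only [firstE?, Option.some.injEq] at hw₁ hf'
        subst hw₁; subst hf'
        exact ⟨fun hc => hp'.1 ((colliderPair_flip _ _).mp hc),
          fun hc => hp'.2.1 (fun hc' => hc ((colliderPair_flip _ _).mpr hc'))⟩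

/-- A walk all of whose edges are forward and none of whose nodes lies in `W`
is open from any incoming edge. -/
lemma openFrom_of_allFwd {W : Set V} :
    ∀ {a b : V} (q : G.Walk a b), q.AllFwd → (∀ u ∈ q.support, u ∉ W) →
      ∀ e : EdgeDir, q.openFrom W e a := by
  intro a b q
  induction q with
  | nil v => intro _ _ _; trivial
  | @cons a m b e h w ih =>
    intro hfwd hW e₀
    obtain ⟨he, hfwd'⟩ := hfwd
    subst he
    refine ⟨fun hc => ?_, fun _ => hW a (start_mem_support _), ?_⟩
    · exact absurd hc.2 (by simp [EdgeDir.arrowFst])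
    · exact ih hfwd' (fun u hu => hW u (List.mem_cons_of_mem _ hu)) _

lemma isOpen_of_allFwd {W : Set V} {a b : V} (q : G.Walk a b) (hf : q.AllFwd)
    (hW : ∀ u ∈ q.support, u ∉ W) : q.IsOpen W := by
  cases q with
  | nil => trivial
  | cons e h w =>
    obtain ⟨he, hf'⟩ := hf
    subst he
    exact openFrom_of_allFwd w hf' (fun u hu => hW u (List.mem_cons_of_mem _ hu)) _

lemma firstE?_fwd_of_allFwd {a b : V} {q : G.Walk a b} (hf : q.AllFwd) {e : EdgeDir}
    (he : q.firstE? = some e) : e = EdgeDir.fwd := by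
  cases q with
  | nil => simp [firstE?] at he
  | cons e' h w =>
    simp only [firstE?, Option.some.injEq] at he
    subst he; exact hf.1

/-- Every step of the walk is an edge of the graph `H`. -/
def Sub (H : MixedGraph V) : {a b : V} → G.Walk a b → Prop
  | _, _, .nil _ => True
  | a, _, @Walk.cons _ _ _ m _ e _ w => H.IsEdge e a m ∧ w.Sub H

/-- Transfer a walk to a graph containing all its edges. -/
def transfer {H : MixedGraph V} : {a b : V} → (w : G.Walk a b) → w.Sub H → H.Walk a b
  | _, _, .nil v, _ => .nil v
  | _, _, .cons _ _ w, hs => .cons _ hs.1 (w.transfer hs.2)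

lemma transfer_support {H : MixedGraph V} :
    ∀ {a b : V} (w : G.Walk a b) (hs : w.Sub H), (w.transfer hs).support = w.support
  | _, _, .nil _, _ => rfl
  | _, _, .cons _ _ w, hs => by
      show _ :: (w.transfer hs.2).support = _ :: w.support
      rw [transfer_support w hs.2]

lemma transfer_allFwd {H : MixedGraph V} :
    ∀ {a b : V} (w : G.Walk a b) (hs : w.Sub H), w.AllFwd → (w.transfer hs).AllFwd
  | _, _, .nil _, _, _ => trivial
  | _, _, .cons _ _ w, hs, hf => ⟨hf.1, transfer_allFwd w hs.2 hf.2⟩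

lemma transfer_firstE? {H : MixedGraph V} :
    ∀ {a b : V} (w : G.Walk a b) (hs : w.Sub H), (w.transfer hs).firstE? = w.firstE?
  | _, _, .nil _, _ => rfl
  | _, _, .cons _ _ _, _ => rfl

/-- Extract a suffix of an all-forward walk starting at an interior node. -/
lemma exists_suffix : ∀ {a b v : V} (w : G.Walk a b), w.AllFwd → v ∈ w.support → v ≠ a →
    ∃ q : G.Walk v b, q.AllFwd ∧ ∀ u ∈ q.support, u ∈ w.support.tail := by
  intro a b v w
  induction w with
  | nil u =>
    intro _ hv hva
    simp only [support, List.mem_singleton] at hv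
    exact absurd hv hva
  | @cons a m b e h w ih =>
    intro hf hv hva
    have hv' : v ∈ w.support := by
      rcases List.mem_cons.mp hv with h' | h'
      · exact absurd h' hva
      · exact h'
    by_cases hvm : v = m
    · subst hvm
      exact ⟨w, hf.2, fun u hu => hu⟩
    · obtain ⟨q, hq1, hq2⟩ := ih hf.2 hv' hvm
      exact ⟨q, hq1, fun u hu => List.mem_of_mem_tail (hq2 u hu)⟩

end Walk

end MixedGraph

section MainProof

open MixedGraph

variable {V : Type} {G : MixedGraph V} {x y z : V} {Z W : Set V}

lemma notW_of_forb (hforb : (Z ∪ W) ∩ G.forb x y = ∅) {u : V} (hu : u ∈ G.forb x y) :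
    u ∉ W := fun hW => by
  have : u ∈ (Z ∪ W) ∩ G.forb x y := ⟨Or.inr hW, hu⟩
  rw [hforb] at this
  exact this

lemma causal_subset_forb {u : V} (hu : u ∈ G.causal x y) : u ∈ G.forb x y :=
  Or.inl ⟨u, hu, Relation.ReflTransGen.refl⟩

/-- Once an arrowhead points into a forbidden node on an open walk, the rest of the
walk is all-forward. -/
lemma allFwd_of_descCausal (hforb : (Z ∪ W) ∩ G.forb x y = ∅) :
    ∀ {u b : V} (w : G.Walk u b), u ∈ G.descSet (G.causal x y) →
      w.openFrom W EdgeDir.fwd u → w.AllFwd := by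
  intro u b w
  induction w with
  | nil => intro _ _; trivial
  | @cons a m b e h w ih =>
    intro hu ho
    have haW : a ∉ W := notW_of_forb hforb (Or.inl hu)
    cases e with
    | fwd =>
      refine ⟨rfl, ih ?_ ho.2.2⟩
      obtain ⟨s, hs, hss⟩ := hu
      exact ⟨s, hs, hss.tail h⟩
    | back =>
      exact absurd (ho.1 ⟨trivial, trivial⟩) haW
    | bi =>
      exact absurd (ho.1 ⟨trivial, trivial⟩) haW

/-- An all-forward walk avoiding `x` is a walk of `G̃`. -/
lemma sub_tilde_of_allFwd : ∀ {a b : V} (q : G.Walk a b), q.AllFwd →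
    (∀ u ∈ q.support, u ≠ x) → q.Sub (G.tilde x y) := by
  intro a b q
  induction q with
  | nil => intro _ _; trivial
  | @cons a m b e h w ih =>
    intro hf hx
    obtain ⟨he, hf'⟩ := hf
    subst he
    exact ⟨⟨h, fun hc => hx a (MixedGraph.Walk.start_mem_support _) hc.1⟩,
      ih hf' (fun u hu => hx u (List.mem_cons_of_mem _ hu))⟩

/-- From a node of `causal_G(x,y)` there is an all-forward walk to `y` in `G̃`
avoiding `W`, with all nodes in `causal_G(x,y)`. -/
lemma causal_dir_walk (hG : G.IsADMG) (hforb : (Z ∪ W) ∩ G.forb x y = ∅) {v : V}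
    (hv : v ∈ G.causal x y) :
    ∃ q : (G.tilde x y).Walk v y, q.AllFwd ∧ q.IsOpen W ∧
      (∀ e, q.firstE? = some e → e = EdgeDir.fwd) ∧ v ∉ W := by
  obtain ⟨hvx, w₀, hfw, hnd, hmem⟩ := hv
  obtain ⟨q, hq1, hq2⟩ := Walk.exists_suffix w₀ hfw hmem hvx
  obtain ⟨t, ht⟩ := w₀.support_start
  have hxt : x ∉ w₀.support.tail := by
    rw [ht]
    rw [ht] at hnd
    exact (List.nodup_cons.mp hnd).1
  have hqnodes : ∀ u ∈ q.support, u ∈ G.causal x y := by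
    intro u hu
    have hut := hq2 u hu
    exact ⟨fun hux => hxt (hux ▸ hut), w₀, hfw, hnd, List.mem_of_mem_tail hut⟩
  have hqW : ∀ u ∈ q.support, u ∉ W :=
    fun u hu => notW_of_forb hforb (causal_subset_forb (hqnodes u hu))
  have hsub : q.Sub (G.tilde x y) :=
    sub_tilde_of_allFwd q hq1 (fun u hu => (hqnodes u hu).1)
  refine ⟨q.transfer hsub, Walk.transfer_allFwd q hsub hq1, ?_, ?_, hqW v (Walk.start_mem_support _)⟩
  · refine Walk.isOpen_of_allFwd _ (Walk.transfer_allFwd q hsub hq1) ?_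
    rw [Walk.transfer_support]
    exact hqW
  · intro e he
    rw [Walk.transfer_firstE?] at he
    exact Walk.firstE?_fwd_of_allFwd hq1 he

/-- The main induction: walking from `z` toward `y` along an open walk, maintaining an
open reversed prefix in `G̃`, until a deleted edge is met. -/
lemma main_induction (hG : G.IsADMG) (hforb : (Z ∪ W) ∩ G.forb x y = ∅)
    (hsep : ¬ (G.tilde x y).dConn {y} Z W) (hz : z ∈ Z) :
    ∀ {v u : V} (s : G.Walk v u), u = y → ∀ e : EdgeDir, s.openFrom W e v →
      (∃ pz : (G.tilde x y).Walk v z, pz.IsOpen W ∧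
        ∀ f, pz.firstE? = some f → f = e.flip) →
      x ∈ s.support ∧ s.EndsWithDirFrom x := by
  have hsymT : ∀ a b, (G.tilde x y).bidir a b → (G.tilde x y).bidir b a := hG.1
  intro v u s
  induction s with
  | nil v =>
    intro hu _ _ hpre
    subst hu
    obtain ⟨pz, hpzo, _⟩ := hpre
    exact absurd ⟨v, rfl, z, hz, pz, hpzo⟩ hsep
  | @cons v m u e₁ h w ih =>
    intro hu e ho hpre
    obtain ⟨pz, hpzo, hpzf⟩ := hpre
    by_cases hdel : (G.tilde x y).IsEdge e₁ v m
    · -- non-deleted edge: extend the reversed prefix and recurse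
      have hpre' : ∃ pz' : (G.tilde x y).Walk m z, pz'.IsOpen W ∧
          ∀ f, pz'.firstE? = some f → f = e₁.flip := by
        refine ⟨.cons e₁.flip (isEdge_flip hsymT hdel) pz, ?_, ?_⟩
        · show pz.openFrom W e₁.flip v
          cases pz with
          | nil => trivial
          | @cons _ n _ f hf pz₂ =>
            have hfe : f = e.flip := hpzf f rfl
            subst hfe
            have hcol : IsColliderPair e₁.flip e.flip ↔ IsColliderPair e e₁ :=
              MixedGraph.colliderPair_flip e e₁
            exact ⟨fun hc => ho.1 (hcol.mp hc),
              fun hc => ho.2.1 (fun hc' => hc (hcol.mpr hc')), hpzo⟩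
        · intro f hf
          have : e₁.flip = f := by simpa [Walk.firstE?] using hf
          exact this.symm
      obtain ⟨hx1, hx2⟩ := ih hu e₁ ho.2.2 hpre'
      exact ⟨List.mem_cons_of_mem _ hx1, Or.inr hx2⟩
    · -- deleted edge
      cases e₁ with
      | bi => exact absurd h hdel
      | fwd =>
        -- the edge is v = x → m ∈ causal, traversed forward
        have hxm : v = x ∧ m ∈ G.causal x y := by
          by_contra hc
          exact hdel ⟨h, hc⟩
        obtain ⟨hv, hmc⟩ := hxm
        subst hv
        refine ⟨Walk.start_mem_support _, Or.inl ⟨rfl, rfl, ?_⟩⟩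
        exact allFwd_of_descCausal hforb w ⟨m, hmc, Relation.ReflTransGen.refl⟩ ho.2.2
      | back =>
        -- the edge is v ∈ causal ← x, traversed backward: contradiction with hsep
        have hxm : m = x ∧ v ∈ G.causal x y := by
          by_contra hc
          exact hdel ⟨h, hc⟩
        subst u
        obtain ⟨q, hq1, hq2, hq3, hvW⟩ := causal_dir_walk hG hforb hxm.2
        refine absurd ⟨y, rfl, z, hz, Walk.revAux hsymT q pz, ?_⟩ hsep
        refine Walk.revAux_isOpen hsymT q pz hq2 hpzo ?_
        intro f₁ f₂ hf₁ hf₂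
        have : f₁ = EdgeDir.fwd := hq3 f₁ hf₁
        subst this
        constructor
        · intro hc
          exact absurd hc.1 (by simp [EdgeDir.flip, EdgeDir.arrowSnd])
        · intro _
          exact hvW
      
end MainProof

/-- Let `{x,y}`, `Z`, `W` be pairwise disjoint node sets in an ADMG `G`
(with `x` and `y` single nodes) such that `(Z ∪ W) ∩ forb_G(x,y) = ∅` and `y ⊥_G̃ Z | W`.
Then every proper walk from `Z` to `y` in `G` that is open given `W` contains `x`, and its
final part from an occurrence of `x` to `y` consists solely of directed edges pointing
toward `y` (a segment of the form `x → ⋯ → y`). -/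
theorem open_proper_walk_ends_directed_from_x {V : Type} (G : MixedGraph V) (hG : G.IsADMG)
    (x y : V) (Z W : Set V)
    (hxy : x ≠ y) (hxZ : x ∉ Z) (hxW : x ∉ W) (hyZ : y ∉ Z) (hyW : y ∉ W)
    (hZW : Disjoint Z W)
    (hforb : (Z ∪ W) ∩ G.forb x y = ∅)
    (hsep : ¬ (G.tilde x y).dConn {y} Z W) :
    ∀ z ∈ Z, ∀ w : G.Walk z y,
      (∀ v ∈ w.support.tail, v ∉ Z) →  -- the walk is proper
      w.IsOpen W →
      x ∈ w.support ∧ w.EndsWithDirFrom x := by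
  intro z hz w hproper hopen
  cases w with
  | nil => exact absurd hz hyZ
  | @cons _ m _ e₁ h w' =>
    have ho : w'.openFrom W e₁ m := hopen
    have hsymT : ∀ a b, (G.tilde x y).bidir a b → (G.tilde x y).bidir b a := hG.1
    have hzforb : z ∉ G.forb x y := fun hf => by
      have : z ∈ (Z ∪ W) ∩ G.forb x y := ⟨Or.inl hz, hf⟩
      rw [hforb] at this
      exact this
    have hedge : (G.tilde x y).IsEdge e₁ z m := by
      cases e₁ with
      | fwd => exact ⟨h, fun hc => hzforb (Or.inr hc.1)⟩
      | back => exact ⟨h, fun hc => hzforb (causal_subset_forb hc.2)⟩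
      | bi => exact h
    have hpre : ∃ pz : (G.tilde x y).Walk m z, pz.IsOpen W ∧
        ∀ f, pz.firstE? = some f → f = e₁.flip := by
      refine ⟨.cons e₁.flip (MixedGraph.isEdge_flip hsymT hedge) (.nil z), trivial, ?_⟩
      intro f hf
      have : e₁.flip = f := by simpa [MixedGraph.Walk.firstE?] using hf
      exact this.symm
    obtain ⟨hx1, hx2⟩ := main_induction hG hforb hsep hz w' rfl e₁ ho hpre
    exact ⟨List.mem_cons_of_mem _ hx1, Or.inr hx2⟩
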